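/- (First Chernoff boosting step.) Let B, W ⊆ [n] be sets in G(n,p) with |B| = (np)^{−1/(4(r−1))} p^{−1}/4 and |W| = o(n). Then with probability 1 − exp(−ω(p^{−1})), the number of vertices in [n]∖(B ∪ W) having at least r neighbours in B is at least (np)^{1/(4(r−1))} p^{−1}. -/

import Mathlib

open MeasureTheory Filter Finset
open scoped ENNReal NNReal

noncomputable section

/-- `P[Bin(t,p) ≥ r]`, the upper tail of the binomial distribution. -/
def binomTail (r t : ℕ) (p : ℝ) : ℝ :=
  ∑ j ∈ Finset.Icc r t, (t.choose j : ℝ) * p ^ j * (1 - p) ^ (t - j)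

/-- `δ = max{(n p^r)^{1/(2(r-1))}, (np)^{-1/(4(r-1))}}`. -/
def deltaP (r : ℕ) (p : ℕ → ℝ) (n : ℕ) : ℝ :=
  max (((n : ℝ) * p n ^ r) ^ ((1 : ℝ) / (2 * ((r : ℝ) - 1))))
      (((n : ℝ) * p n) ^ (-(1 : ℝ) / (4 * ((r : ℝ) - 1))))

/-- `t_0 = ((1+δ)(r-1)!/(n p^r))^{1/(r-1)}`. -/
def tZero (r : ℕ) (p : ℕ → ℝ) (n : ℕ) : ℝ :=
  ((1 + deltaP r p n) * (Nat.factorial (r - 1) : ℝ) / ((n : ℝ) * p n ^ r)) ^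
    ((1 : ℝ) / ((r : ℝ) - 1))

/-- `(n π̂(t) - t)/(1 - π̂(t))`. -/
def critFun (r : ℕ) (p : ℕ → ℝ) (n : ℕ) (t : ℕ) : ℝ :=
  ((n : ℝ) * binomTail r t (p n) - t) / (1 - binomTail r t (p n))

/-- `a_c = - min_{t ≤ t_0} (n π̂(t) - t)/(1 - π̂(t))`. -/
def aCrit (r : ℕ) (p : ℕ → ℝ) (n : ℕ) : ℝ :=
  - Finset.min' ((Finset.range (⌊tZero r p n⌋₊ + 1)).image (critFun r p n))
      (Finset.Nonempty.image (Finset.nonempty_range_iff.mpr (Nat.succ_ne_zero _)) _)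

/-- `t_c`, the smallest `t ≤ t_0` attaining the minimum defining `a_c`. -/
def tCrit (r : ℕ) (p : ℕ → ℝ) (n : ℕ) : ℕ :=
  sInf {t : ℕ | t ≤ ⌊tZero r p n⌋₊ ∧ critFun r p n t = - aCrit r p n}

/-- The Bernoulli measure with parameter `q` on `Bool`. -/
def bernoulliMeasure (q : ℝ) : Measure Bool :=
  (PMF.bernoulli (min (Real.toNNReal q) 1) (min_le_right _ _)).toMeasure

instance (q : ℝ) : IsProbabilityMeasure (bernoulliMeasure q) :=
  PMF.toMeasure.isProbabilityMeasure _

/-- The binomial random graph `G(n,q)`: each potential edge is present independently with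
probability `q`. A sample is a function `Sym2 (Fin n) → Bool`. -/
def gnp (n : ℕ) (q : ℝ) : Measure (Sym2 (Fin n) → Bool) :=
  Measure.pi fun _ => bernoulliMeasure q

/-- The simple graph determined by a sample `ω` of `G(n,q)`. -/
def toGraph {n : ℕ} (ω : Sym2 (Fin n) → Bool) : SimpleGraph (Fin n) where
  Adj u v := u ≠ v ∧ ω s(u, v) = true
  symm := by
    constructor
    intro u v h
    exact ⟨h.1.symm, by rw [Sym2.eq_swap]; exact h.2⟩
  loopless := ⟨fun v h => h.1 rfl⟩

/-- The number of neighbours of `v` inside the set `S` in the graph given by `ω`. -/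
def nbrCount {n : ℕ} (ω : Sym2 (Fin n) → Bool) (S : Finset (Fin n)) (v : Fin n) : ℕ :=
  (S.filter fun u => u ≠ v ∧ ω s(u, v) = true).card

/-- The set of the first `a` vertices, the initially infected set `A(0) = {1,…,a}`. -/
def initSet (n a : ℕ) : Finset (Fin n) :=
  Finset.univ.filter fun v => v.val < a

/-- One round of bootstrap percolation with threshold `r`. -/
def bstep {n : ℕ} (r : ℕ) (ω : Sym2 (Fin n) → Bool) (S : Finset (Fin n)) : Finset (Fin n) :=
  S ∪ Finset.univ.filter fun v => r ≤ nbrCount ω S v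

/-- The final infected set `A_f` of bootstrap percolation with threshold `r` started at `A0`. -/
def finalSet {n : ℕ} (r : ℕ) (ω : Sym2 (Fin n) → Bool) (A0 : Finset (Fin n)) : Finset (Fin n) :=
  (bstep r ω)^[n] A0

/-- The exploration process: `Z(t)`, the set of examined vertices at time `t`. -/
def expZ {n : ℕ} (r a : ℕ) (ω : Sym2 (Fin n) → Bool) : ℕ → Finset (Fin n)
  | 0 => ∅
  | t + 1 =>
    let Z := expZ r a ω t
    let A := initSet n a ∪ (Finset.univ.filter fun v => a ≤ v.val ∧ r ≤ nbrCount ω Z v)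
    if h : (A \ Z).Nonempty then insert ((A \ Z).min' h) Z else Z

/-- The infected set `A(t)` at time `t` of the exploration process. -/
def expA {n : ℕ} (r a : ℕ) (ω : Sym2 (Fin n) → Bool) (t : ℕ) : Finset (Fin n) :=
  initSet n a ∪ (Finset.univ.filter fun v => a ≤ v.val ∧ r ≤ nbrCount ω (expZ r a ω t) v)

/-- `T`, the smallest `t` with `A(t) = Z(t)`. -/
def expT {n : ℕ} (r a : ℕ) (ω : Sym2 (Fin n) → Bool) : ℕ :=
  sInf {t | expA r a ω t = expZ r a ω t}

/-- `X(t,i)`, the indicator that vertex `a+i` has at least `r` neighbours in `Z(t)`. -/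
def expX {n : ℕ} (r a : ℕ) (ω : Sym2 (Fin n) → Bool) (t i : ℕ) : ℝ :=
  if h : 1 ≤ i ∧ a + i ≤ n then
    (if r ≤ nbrCount ω (expZ r a ω t) ⟨a + i - 1, by omega⟩ then 1 else 0)
  else 0

/-- `π(t) = π̂(t)` for `t ≤ T` and `π(t) = π̂(T)` for `t > T`. -/
def expPi {n : ℕ} (r a : ℕ) (q : ℝ) (ω : Sym2 (Fin n) → Bool) (t : ℕ) : ℝ :=
  if t ≤ expT r a ω then binomTail r t q else binomTail r (expT r a ω) q

/-- The martingale value `M(t,i)`. -/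
def expM {n : ℕ} (r a : ℕ) (q : ℝ) (t i : ℕ) (ω : Sym2 (Fin n) → Bool) : ℝ :=
  (∑ j ∈ Finset.Icc 1 i, (expX r a ω t j - expPi r a q ω t) / (1 - expPi r a q ω t)) +
  ∑ j ∈ Finset.Icc (i + 1) (n - a),
    (expX r a ω (t - 1) j - expPi r a q ω (t - 1)) / (1 - expPi r a q ω (t - 1))

/-- The rounds `(0,n-a), (1,1), …, (n,n-a)` listed linearly: round `0` is `(0,n-a)` and
round `k ≥ 1` is `(⌈k/(n-a)⌉, ((k-1) mod (n-a)) + 1)`. -/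
def expMseq (n r a : ℕ) (q : ℝ) (k : ℕ) (ω : Sym2 (Fin n) → Bool) : ℝ :=
  if k = 0 then expM r a q 0 (n - a) ω
  else expM r a q ((k - 1) / (n - a) + 1) ((k - 1) % (n - a) + 1) ω


lemma measAll {α : Type*} [Countable α] [MeasurableSpace α] [MeasurableSingletonClass α]
    (s : Set α) : MeasurableSet s := (Set.to_countable s).measurableSet

lemma measFun {α β : Type*} [Countable α] [MeasurableSpace α] [MeasurableSingletonClass α]
    [MeasurableSpace β] (f : α → β) : Measurable f := fun _ _ => measAll _

-- two-block independence
lemma indep_two {ι : Type*} [Fintype ι] (ν : ι → Measure Bool)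
    [∀ i, IsProbabilityMeasure (ν i)] (S : Set ι) (E F : Set (ι → Bool))
    (hE : ∀ ω ω', (∀ i ∈ S, ω i = ω' i) → ω ∈ E → ω' ∈ E)
    (hF : ∀ ω ω', (∀ i ∉ S, ω i = ω' i) → ω ∈ F → ω' ∈ F) :
    Measure.pi ν (E ∩ F) = Measure.pi ν E * Measure.pi ν F := by
  classical
  set e := MeasurableEquiv.piEquivPiSubtypeProd (fun _ : ι => Bool) (· ∈ S) with he
  have hmp := MeasureTheory.measurePreserving_piEquivPiSubtypeProd ν (· ∈ S)
  set P := ((Measure.pi fun i : Subtype (· ∈ S) => ν i).prod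
      (Measure.pi fun i : Subtype (¬ · ∈ S) => ν i)) with hP
  have hmap : ∀ G : Set (ι → Bool), Measure.pi ν G = P (e '' G) := by
    intro G
    rw [← hmp.map_eq, MeasurableEquiv.map_apply]
    congr 1
    exact (MeasurableEquiv.preimage_image e G).symm
  set A := Prod.fst '' (e '' E) with hA
  set B := Prod.snd '' (e '' F) with hB
  have happ1 : ∀ (ω : ι → Bool) (i : ι) (hi : i ∈ S), (e ω).1 ⟨i, hi⟩ = ω i := fun _ _ _ => rfl
  have happ2 : ∀ (ω : ι → Bool) (i : ι) (hi : ¬ i ∈ S), (e ω).2 ⟨i, hi⟩ = ω i := fun _ _ _ => rfl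
  have keyE : ∀ ω : ι → Bool, ω ∈ E ↔ (e ω).1 ∈ A := by
    intro ω
    constructor
    · exact fun h => ⟨e ω, ⟨ω, h, rfl⟩, rfl⟩
    · rintro ⟨x', ⟨ω', hω', rfl⟩, hfst⟩
      refine hE ω' ω (fun i hi => ?_) hω'
      rw [← happ1 ω' i hi, hfst, happ1 ω i hi]
  have keyF : ∀ ω : ι → Bool, ω ∈ F ↔ (e ω).2 ∈ B := by
    intro ω
    constructor
    · exact fun h => ⟨e ω, ⟨ω, h, rfl⟩, rfl⟩
    · rintro ⟨y', ⟨ω', hω', rfl⟩, hsnd⟩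
      refine hF ω' ω (fun i hi => ?_) hω'
      rw [← happ2 ω' i hi, hsnd, happ2 ω i hi]
  have himg : ∀ G : Set (ι → Bool), ∀ z : ({ i // i ∈ S } → Bool) × ({ i // ¬ i ∈ S } → Bool),
      z ∈ e '' G ↔ e.symm z ∈ G := by
    intro G z
    constructor
    · rintro ⟨ω, hω, rfl⟩; rwa [MeasurableEquiv.symm_apply_apply]
    · intro h; exact ⟨e.symm z, h, e.apply_symm_apply z⟩
  have hEF : e '' (E ∩ F) = A ×ˢ B := by
    ext ⟨x, y⟩
    rw [himg, Set.mem_prod, Set.mem_inter_iff, keyE, keyF, e.apply_symm_apply]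
  have hEe : e '' E = A ×ˢ (Set.univ : Set ({ i // ¬ i ∈ S } → Bool)) := by
    ext ⟨x, y⟩
    rw [himg, Set.mem_prod, keyE, e.apply_symm_apply]
    simp
  have hFe : e '' F = (Set.univ : Set ({ i // i ∈ S } → Bool)) ×ˢ B := by
    ext ⟨x, y⟩
    rw [himg, Set.mem_prod, keyF, e.apply_symm_apply]
    simp
  rw [hmap, hmap, hmap, hEF, hEe, hFe, hP, Measure.prod_prod, Measure.prod_prod,
    Measure.prod_prod]
  simp [measure_univ]


lemma indep_blocks {ι V : Type*} [Fintype ι] [DecidableEq V] (ν : ι → Measure Bool)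
    [∀ i, IsProbabilityMeasure (ν i)] (T : Finset V) (blk : V → Set ι)
    (E : V → Set (ι → Bool))
    (hdisj : ∀ v ∈ T, ∀ w ∈ T, v ≠ w → Disjoint (blk v) (blk w))
    (hdep : ∀ v ∈ T, ∀ ω ω', (∀ i ∈ blk v, ω i = ω' i) → ω ∈ E v → ω' ∈ E v) :
    Measure.pi ν (⋂ v ∈ T, E v) = ∏ v ∈ T, Measure.pi ν (E v) := by
  classical
  induction T using Finset.induction_on with
  | empty => simp
  | @insert a T ha ih =>
    rw [Finset.set_biInter_insert, Finset.prod_insert ha,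
      indep_two ν (blk a) (E a) (⋂ v ∈ T, E v)
        (hdep a (Finset.mem_insert_self a T))
        (by
          intro ω ω' hagree hω
          simp only [Set.mem_iInter] at hω ⊢
          intro v hv
          refine hdep v (Finset.mem_insert_of_mem hv) ω ω' (fun i hi => ?_) (hω v hv)
          refine hagree i (fun hia => ?_)
          exact (hdisj a (Finset.mem_insert_self a T) v (Finset.mem_insert_of_mem hv)
            (fun h => ha (h ▸ hv)) ).le_bot ⟨hia, hi⟩),
      ih (fun v hv w hw hvw => hdisj v (Finset.mem_insert_of_mem hv)
        w (Finset.mem_insert_of_mem hw) hvw)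
        (fun v hv => hdep v (Finset.mem_insert_of_mem hv))]

lemma bern_singleton {q : ℝ} (h0 : 0 ≤ q) (h1 : q ≤ 1) (b : Bool) :
    bernoulliMeasure q {b} = if b then ENNReal.ofReal q else ENNReal.ofReal (1 - q) := by
  rw [bernoulliMeasure, PMF.toMeasure_apply_singleton _ _ (measurableSet_singleton b),
    PMF.bernoulli_apply, min_eq_left (Real.toNNReal_le_one.mpr h1)]
  cases b
  · rw [ENNReal.ofReal_sub 1 h0, ENNReal.ofReal_one]
    simp [ENNReal.ofReal]
  · simp [ENNReal.ofReal]

lemma sym2_inj {n : ℕ} {v : Fin n} {B : Finset (Fin n)} (hv : v ∉ B) :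
    ∀ u ∈ B, ∀ u' ∈ B, s(u, v) = s(u', v) → u = u' := by
  intro u hu u' hu' h
  rw [Sym2.eq_iff] at h
  rcases h with ⟨h1, _⟩ | ⟨h1, h2⟩
  · exact h1
  · exact (hv (h1 ▸ hu)).elim

lemma cyl_measure {n : ℕ} {q : ℝ} (h0 : 0 ≤ q) (h1 : q ≤ 1) (B S : Finset (Fin n))
    (v : Fin n) (hv : v ∉ B) (hS : S ⊆ B) [DecidablePred (· ∈ S)] :
    gnp n q {ω | ∀ u ∈ B, ω s(u, v) = decide (u ∈ S)} =
      ENNReal.ofReal q ^ S.card * ENNReal.ofReal (1 - q) ^ (B.card - S.card) := by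
  classical
  set g : Sym2 (Fin n) → Set Bool :=
    fun e => {x | ∀ u ∈ B, e = s(u, v) → x = decide (u ∈ S)} with hg
  have hset : {ω : Sym2 (Fin n) → Bool | ∀ u ∈ B, ω s(u, v) = decide (u ∈ S)} =
      Set.pi Set.univ g := by
    ext ω
    simp only [Set.mem_setOf_eq, Set.mem_pi, Set.mem_univ, forall_true_left, hg]
    constructor
    · intro h e u hu he; subst he; exact h u hu
    · intro h u hu; exact h s(u, v) u hu rfl
  rw [hset, gnp, Measure.pi_pi]
  have hstep : ∀ u ∈ B, (bernoulliMeasure q) (g s(u, v)) =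
      (if u ∈ S then ENNReal.ofReal q else ENNReal.ofReal (1 - q)) := by
    intro u hu
    have : g s(u, v) = {decide (u ∈ S)} := by
      ext x
      simp only [hg, Set.mem_setOf_eq, Set.mem_singleton_iff]
      constructor
      · intro h; exact h u hu rfl
      · intro h u' hu' he
        rw [h, sym2_inj hv u hu u' hu' he]
    rw [this, bern_singleton h0 h1]
    by_cases h : u ∈ S <;> simp [h]
  calc ∏ e : Sym2 (Fin n), (bernoulliMeasure q) (g e)
      = ∏ e ∈ B.image (fun u => s(u, v)), (bernoulliMeasure q) (g e) := by
        refine (Finset.prod_subset (Finset.subset_univ _) ?_).symm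
        intro e _ he
        have : g e = Set.univ := by
          ext x
          simp only [hg, Set.mem_setOf_eq, Set.mem_univ, iff_true]
          intro u hu heq
          exact absurd (heq ▸ Finset.mem_image_of_mem _ hu) he
        rw [this]; exact measure_univ
    _ = ∏ u ∈ B, (bernoulliMeasure q) (g s(u, v)) := by
        refine Finset.prod_image ?_
        intro u hu u' hu' h
        exact sym2_inj hv u hu u' hu' h
    _ = ∏ u ∈ B, (if u ∈ S then ENNReal.ofReal q else ENNReal.ofReal (1 - q)) :=
        Finset.prod_congr rfl hstep
    _ = ENNReal.ofReal q ^ S.card * ENNReal.ofReal (1 - q) ^ (B.card - S.card) := by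
        rw [Finset.prod_ite]
        simp only [Finset.prod_const]
        congr 1
        · congr 1
          rw [Finset.filter_mem_eq_inter, Finset.inter_eq_right.mpr hS]
        · congr 1
          rw [← Finset.card_sdiff_of_subset hS]
          congr 1
          ext u
          simp only [Finset.mem_filter, Finset.mem_sdiff]

lemma pi_lower {n : ℕ} {q : ℝ} (h0 : 0 ≤ q) (h1 : q ≤ 1) (r : ℕ) (B : Finset (Fin n))
    (v : Fin n) (hv : v ∉ B) :
    ENNReal.ofReal ((B.card.choose r : ℝ) * q ^ r * (1 - q) ^ (B.card - r)) ≤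
      gnp n q {ω | r ≤ nbrCount ω B v} := by
  classical
  set E : Finset (Fin n) → Set (Sym2 (Fin n) → Bool) :=
    fun S => {ω | ∀ u ∈ B, ω s(u, v) = decide (u ∈ S)} with hE
  have hsub : ∀ S ∈ B.powersetCard r, E S ⊆ {ω | r ≤ nbrCount ω B v} := by
    intro S hS ω hω
    obtain ⟨hSB, hScard⟩ := Finset.mem_powersetCard.mp hS
    have : (B.filter fun u => u ≠ v ∧ ω s(u, v) = true) = S := by
      ext u
      simp only [Finset.mem_filter]
      constructor
      · rintro ⟨hu, -, hωu⟩
        have := hω u hu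
        rw [hωu] at this
        exact of_decide_eq_true this.symm
      · intro hu
        have huB := hSB hu
        refine ⟨huB, fun h => hv (h ▸ huB), ?_⟩
        rw [hω u huB, decide_eq_true_eq]
        exact hu
    show r ≤ nbrCount ω B v
    rw [nbrCount, this, hScard]
  have hmeas : ∀ S : Finset (Fin n), MeasurableSet (E S) := fun _ => measAll _
  have hdisj : (B.powersetCard r : Set (Finset (Fin n))).PairwiseDisjoint E := by
    intro S hS S' hS' hne
    rw [Finset.mem_coe, Finset.mem_powersetCard] at hS hS'
    refine Set.disjoint_left.mpr fun ω hω hω' => hne ?_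
    ext u
    constructor
    · intro hu
      have huB := hS.1 hu
      have h1 := hω u huB; have h2 := hω' u huB
      rw [h1] at h2
      simp only [decide_eq_decide] at h2
      exact h2.mp hu
    · intro hu
      have huB := hS'.1 hu
      have h1 := hω u huB; have h2 := hω' u huB
      rw [h1] at h2
      simp only [decide_eq_decide] at h2
      exact h2.mpr hu
  calc ENNReal.ofReal ((B.card.choose r : ℝ) * q ^ r * (1 - q) ^ (B.card - r))
      = (B.card.choose r : ℝ≥0∞) * ENNReal.ofReal q ^ r *
          ENNReal.ofReal (1 - q) ^ (B.card - r) := by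
        rw [ENNReal.ofReal_mul (by positivity), ENNReal.ofReal_mul (by positivity),
          ENNReal.ofReal_pow h0, ENNReal.ofReal_pow (by linarith), ENNReal.ofReal_natCast]
    _ = ∑ S ∈ B.powersetCard r, (ENNReal.ofReal q ^ S.card *
          ENNReal.ofReal (1 - q) ^ (B.card - S.card)) := by
        rw [Finset.sum_congr rfl (fun S hS => by
          rw [(Finset.mem_powersetCard.mp hS).2]), Finset.sum_const,
          Finset.card_powersetCard, nsmul_eq_mul, mul_assoc]
    _ = ∑ S ∈ B.powersetCard r, gnp n q (E S) := by
        refine Finset.sum_congr rfl fun S hS => ?_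
        rw [hE, cyl_measure h0 h1 B S v hv (Finset.mem_powersetCard.mp hS).1]
    _ = gnp n q (⋃ S ∈ B.powersetCard r, E S) :=
        (measure_biUnion_finset hdisj fun S _ => hmeas S).symm
    _ ≤ gnp n q {ω | r ≤ nbrCount ω B v} := by
        refine measure_mono ?_
        exact Set.iUnion₂_subset hsub


lemma gnp_prob (n : ℕ) (q : ℝ) : IsProbabilityMeasure (gnp n q) := by
  unfold gnp; infer_instance

lemma nbr_eq {n : ℕ} (B : Finset (Fin n)) (v : Fin n) (ω ω' : Sym2 (Fin n) → Bool)
    (h : ∀ e ∈ {e : Sym2 (Fin n) | ∃ u ∈ B, e = s(u, v)}, ω e = ω' e) :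
    nbrCount ω B v = nbrCount ω' B v := by
  unfold nbrCount
  congr 1
  refine Finset.filter_congr fun u hu => ?_
  rw [h s(u, v) ⟨u, hu, rfl⟩]

lemma chernoff_fixed {n : ℕ} {q : ℝ} (h0 : 0 < q) (h1 : q < 1) (r : ℕ)
    (B W : Finset (Fin n)) (kk : ℝ) :
    gnp n q {ω | ¬ (kk ≤
        ((((Finset.univ \ (B ∪ W)).filter fun v => r ≤ nbrCount ω B v).card : ℝ)))} ≤
      ENNReal.ofReal (Real.exp ((⌈kk⌉₊ : ℝ) * Real.log 2 -
        (((Finset.univ \ (B ∪ W)).card : ℝ) *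
          ((B.card.choose r : ℝ) * q ^ r * (1 - q) ^ (B.card - r)) / 2))) := by
  classical
  haveI := gnp_prob n q
  set V' := Finset.univ \ (B ∪ W) with hV'
  set π₀ : ℝ := (B.card.choose r : ℝ) * q ^ r * (1 - q) ^ (B.card - r) with hπ₀
  have hq1 : (0:ℝ) ≤ 1 - q := by linarith
  have hπ₀0 : 0 ≤ π₀ := by positivity
  set m := V'.card with hm
  set k' := ⌈kk⌉₊ with hk'
  rcases Finset.eq_empty_or_nonempty V' with hVe | ⟨v₀, hv₀⟩
  · refine le_trans prob_le_one ?_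
    rw [ENNReal.one_le_ofReal]
    refine Real.one_le_exp ?_
    have : m = 0 := by rw [hm, hVe]; simp
    rw [this]
    simp only [Nat.cast_zero, zero_mul, zero_div, sub_zero]
    positivity
  -- nonempty case
  have hv₀B : v₀ ∉ B := by
    rw [hV', Finset.mem_sdiff, Finset.mem_union] at hv₀
    exact fun h => hv₀.2 (Or.inl h)
  have hVB : ∀ v ∈ V', v ∉ B := by
    intro v hv
    rw [hV', Finset.mem_sdiff, Finset.mem_union] at hv
    exact fun h => hv.2 (Or.inl h)
  have hπ₀1 : π₀ ≤ 1 := by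
    rw [← ENNReal.ofReal_le_one]
    exact le_trans (pi_lower h0.le h1.le r B v₀ hv₀B) prob_le_one
  -- the weight function
  set g : (Sym2 (Fin n) → Bool) → ℝ≥0∞ := fun ω =>
    ∏ v ∈ V', ((if r ≤ nbrCount ω B v then 0 else 2⁻¹) + 2⁻¹) with hgdef
  have hg_count : ∀ ω, g ω =
      (2⁻¹ : ℝ≥0∞) ^ (V'.filter fun v => r ≤ nbrCount ω B v).card := by
    intro ω
    simp only [hgdef]
    rw [← Finset.prod_filter_mul_prod_filter_not V'
      (fun v => r ≤ nbrCount ω B v)]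
    have e1 : ∀ v ∈ V'.filter (fun v => r ≤ nbrCount ω B v),
        ((if r ≤ nbrCount ω B v then (0:ℝ≥0∞) else 2⁻¹) + 2⁻¹) = 2⁻¹ := by
      intro v hv
      rw [Finset.mem_filter] at hv
      rw [if_pos hv.2, zero_add]
    have e2 : ∀ v ∈ V'.filter (fun v => ¬ r ≤ nbrCount ω B v),
        ((if r ≤ nbrCount ω B v then (0:ℝ≥0∞) else 2⁻¹) + 2⁻¹) = 1 := by
      intro v hv
      rw [Finset.mem_filter] at hv
      rw [if_neg hv.2]
      rw [ENNReal.inv_two_add_inv_two]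
    rw [Finset.prod_congr rfl e1, Finset.prod_congr rfl e2, Finset.prod_const,
      Finset.prod_const, one_pow, mul_one]
  -- Markov
  have hsub : {ω : Sym2 (Fin n) → Bool |
        ¬ (kk ≤ (((V'.filter fun v => r ≤ nbrCount ω B v).card : ℝ)))} ⊆
      {ω | (2⁻¹:ℝ≥0∞) ^ k' ≤ g ω} := by
    intro ω hω
    simp only [Set.mem_setOf_eq, not_le] at hω ⊢
    rw [hg_count ω]
    refine pow_le_pow_right_of_le_one' (ENNReal.inv_le_one.mpr one_le_two) ?_
    have : ((V'.filter fun v => r ≤ nbrCount ω B v).card : ℝ) < k' :=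
      lt_of_lt_of_le hω (Nat.le_ceil kk)
    exact_mod_cast this.le
  have hmar : (2⁻¹:ℝ≥0∞) ^ k' * gnp n q {ω | ¬ (kk ≤
        (((V'.filter fun v => r ≤ nbrCount ω B v).card : ℝ)))} ≤
      ∫⁻ ω, g ω ∂(gnp n q) :=
    le_trans (mul_le_mul_right (measure_mono hsub) _)
      (mul_meas_ge_le_lintegral₀ (measFun g).aemeasurable _)
  -- complement probabilities
  have hEc : ∀ v ∈ V', gnp n q {ω | ¬ (r ≤ nbrCount ω B v)} ≤ ENNReal.ofReal (1 - π₀) := by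
    intro v hv
    have hcompl : {ω : Sym2 (Fin n) → Bool | ¬ (r ≤ nbrCount ω B v)} =
        {ω | r ≤ nbrCount ω B v}ᶜ := rfl
    rw [hcompl, measure_compl (measAll _) (measure_ne_top _ _), measure_univ,
      ENNReal.ofReal_sub 1 hπ₀0, ENNReal.ofReal_one]
    exact tsub_le_tsub_left (pi_lower h0.le h1.le r B v (hVB v hv)) 1
  -- block independence setup
  set blk : Fin n → Set (Sym2 (Fin n)) := fun v => {e | ∃ u ∈ B, e = s(u, v)} with hblk
  have hdisj : ∀ v ∈ V', ∀ w ∈ V', v ≠ w → Disjoint (blk v) (blk w) := by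
    intro v hv w hw hvw
    rw [Set.disjoint_left]
    rintro e ⟨u, hu, rfl⟩ ⟨u', hu', he⟩
    rw [Sym2.eq_iff] at he
    rcases he with ⟨h1, h2⟩ | ⟨h1, h2⟩
    · exact hvw h2
    · exact hVB v hv (h2 ▸ hu')
  have hdep : ∀ v ∈ V', ∀ (ω ω' : Sym2 (Fin n) → Bool),
      (∀ e ∈ blk v, ω e = ω' e) → ω ∈ {ω | ¬ (r ≤ nbrCount ω B v)} →
        ω' ∈ {ω | ¬ (r ≤ nbrCount ω B v)} := by
    intro v _ ω ω' hagree hω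
    simpa only [Set.mem_setOf_eq, nbr_eq B v ω ω' hagree] using hω
  -- the lintegral bound
  have hint : ∫⁻ ω, g ω ∂(gnp n q) ≤
      (2⁻¹ * ENNReal.ofReal (1 - π₀) + 2⁻¹) ^ m := by
    have hexpand : ∀ ω, g ω = ∑ S ∈ V'.powerset,
        (∏ v ∈ S, (if r ≤ nbrCount ω B v then (0:ℝ≥0∞) else 2⁻¹)) *
          ∏ v ∈ V' \ S, (2⁻¹:ℝ≥0∞) := fun ω => Finset.prod_add _ _ _
    calc ∫⁻ ω, g ω ∂(gnp n q)
        = ∑ S ∈ V'.powerset, ∫⁻ ω,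
            ((∏ v ∈ S, (if r ≤ nbrCount ω B v then (0:ℝ≥0∞) else 2⁻¹)) *
              ∏ v ∈ V' \ S, (2⁻¹:ℝ≥0∞)) ∂(gnp n q) := by
          rw [← lintegral_finset_sum' _ (fun S _ => (measFun _).aemeasurable)]
          exact lintegral_congr fun ω => hexpand ω
      _ = ∑ S ∈ V'.powerset,
            (gnp n q (⋂ v ∈ S, {ω | ¬ (r ≤ nbrCount ω B v)}) * (2⁻¹:ℝ≥0∞) ^ S.card) *
              (2⁻¹:ℝ≥0∞) ^ (V' \ S).card := by
          refine Finset.sum_congr rfl fun S hS => ?_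
          rw [Finset.prod_const]
          have hind : ∀ ω : Sym2 (Fin n) → Bool,
              (∏ v ∈ S, (if r ≤ nbrCount ω B v then (0:ℝ≥0∞) else 2⁻¹)) =
                Set.indicator (⋂ v ∈ S, {ω | ¬ (r ≤ nbrCount ω B v)})
                  (fun _ => (2⁻¹:ℝ≥0∞) ^ S.card) ω := by
            intro ω
            by_cases h : ∀ v ∈ S, ¬ (r ≤ nbrCount ω B v)
            · rw [Set.indicator_of_mem (by
                simp only [Set.mem_iInter, Set.mem_setOf_eq]; exact h)]
              rw [Finset.prod_congr rfl (fun v hv => if_neg (h v hv)), Finset.prod_const]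
            · push_neg at h
              obtain ⟨v, hv, hrv⟩ := h
              rw [Set.indicator_of_notMem (by
                simp only [Set.mem_iInter, Set.mem_setOf_eq, not_forall]
                exact ⟨v, hv, not_not.mpr hrv⟩)]
              exact Finset.prod_eq_zero hv (if_pos hrv)
          rw [lintegral_congr fun ω => by rw [hind ω]]
          rw [lintegral_mul_const _ (measFun _), lintegral_indicator_const (measAll _),
            mul_comm ((2:ℝ≥0∞)⁻¹ ^ S.card)]
      _ = ∑ S ∈ V'.powerset,
            ((∏ v ∈ S, gnp n q {ω | ¬ (r ≤ nbrCount ω B v)}) * (2⁻¹:ℝ≥0∞) ^ S.card) *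
              (2⁻¹:ℝ≥0∞) ^ (V' \ S).card := by
          refine Finset.sum_congr rfl fun S hS => ?_
          rw [Finset.mem_powerset] at hS
          rw [show gnp n q = Measure.pi (fun _ => bernoulliMeasure q) from rfl,
            indep_blocks _ S blk _
              (fun v hv w hw hvw => hdisj v (hS hv) w (hS hw) hvw)
              (fun v hv => hdep v (hS hv))]
      _ ≤ ∑ S ∈ V'.powerset,
            ((∏ v ∈ S, ENNReal.ofReal (1 - π₀)) * (2⁻¹:ℝ≥0∞) ^ S.card) *
              (2⁻¹:ℝ≥0∞) ^ (V' \ S).card := by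
          refine Finset.sum_le_sum fun S hS => ?_
          rw [Finset.mem_powerset] at hS
          refine mul_le_mul_left (mul_le_mul_left (Finset.prod_le_prod' ?_) _) _
          exact fun v hv => hEc v (hS hv)
      _ = ∑ S ∈ V'.powerset,
            (∏ v ∈ S, (ENNReal.ofReal (1 - π₀) * 2⁻¹)) * ∏ v ∈ V' \ S, (2⁻¹:ℝ≥0∞) := by
          refine Finset.sum_congr rfl fun S hS => ?_
          rw [Finset.prod_const, Finset.prod_const, Finset.prod_const, mul_pow, mul_assoc]
      _ = ∏ v ∈ V', (ENNReal.ofReal (1 - π₀) * 2⁻¹ + 2⁻¹) :=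
          (Finset.prod_add _ _ _).symm
      _ = (2⁻¹ * ENNReal.ofReal (1 - π₀) + 2⁻¹) ^ m := by
          rw [Finset.prod_const, hm, mul_comm (ENNReal.ofReal (1 - π₀))]
  -- combine
  have hfail : gnp n q {ω | ¬ (kk ≤
        (((V'.filter fun v => r ≤ nbrCount ω B v).card : ℝ)))} ≤
      (2:ℝ≥0∞) ^ k' * (2⁻¹ * ENNReal.ofReal (1 - π₀) + 2⁻¹) ^ m := by
    have h2 : (2:ℝ≥0∞) ^ k' * ((2⁻¹:ℝ≥0∞) ^ k' * gnp n q {ω | ¬ (kk ≤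
        (((V'.filter fun v => r ≤ nbrCount ω B v).card : ℝ)))}) = gnp n q {ω | ¬ (kk ≤
        (((V'.filter fun v => r ≤ nbrCount ω B v).card : ℝ)))} := by
      rw [← mul_assoc, ← mul_pow, ENNReal.mul_inv_cancel (by norm_num) (by norm_num),
        one_pow, one_mul]
    rw [← h2]
    exact mul_le_mul_right (le_trans hmar hint) _
  refine le_trans hfail ?_
  -- convert to reals
  have hhalf : (2⁻¹:ℝ≥0∞) = ENNReal.ofReal 2⁻¹ := by
    rw [ENNReal.ofReal_inv_of_pos (by norm_num)]
    norm_num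
  have hbase : (2⁻¹ * ENNReal.ofReal (1 - π₀) + 2⁻¹ : ℝ≥0∞) =
      ENNReal.ofReal (1 - π₀ / 2) := by
    rw [hhalf, ← ENNReal.ofReal_mul (by norm_num), ← ENNReal.ofReal_add
      (mul_nonneg (by norm_num) (by linarith)) (by norm_num)]
    congr 1
    ring
  have h2e : (2:ℝ≥0∞) = ENNReal.ofReal 2 := by norm_num
  rw [hbase, h2e, ← ENNReal.ofReal_pow (by norm_num), ← ENNReal.ofReal_pow (by linarith),
    ← ENNReal.ofReal_mul (by positivity)]
  refine ENNReal.ofReal_le_ofReal ?_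
  have hb1 : (1 - π₀ / 2) ≤ Real.exp (-(π₀ / 2)) := by
    have := Real.add_one_le_exp (-(π₀ / 2))
    linarith
  calc (2:ℝ) ^ k' * (1 - π₀ / 2) ^ m
      ≤ Real.exp ((k' : ℝ) * Real.log 2) * Real.exp (-(π₀ / 2)) ^ m := by
        refine mul_le_mul ?_ (pow_le_pow_left₀ (by linarith) hb1 m) (pow_nonneg (by linarith) m) (by positivity)
        rw [Real.exp_nat_mul, Real.exp_log (by norm_num)]
    _ = Real.exp ((k' : ℝ) * Real.log 2 - (m : ℝ) * π₀ / 2) := by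
        rw [← Real.exp_nat_mul, ← Real.exp_add]
        congr 1
        ring


set_option maxHeartbeats 1000000 in
/-- **First Chernoff boosting step.** Let `B, W ⊆ [n]` with
`|B| = (np)^{-1/(4(r-1))} p⁻¹ / 4` and `|W| = o(n)`. Then with probability
`1 - exp(-ω(p⁻¹))`, the number of vertices in `[n] ∖ (B ∪ W)` having at least `r`
neighbours in `B` is at least `(np)^{1/(4(r-1))} p⁻¹`. -/
theorem first_chernoff_boost (r : ℕ) (hr : 2 ≤ r) (p : ℕ → ℝ)
    (hp : ∀ n, p n ∈ Set.Ioo (0 : ℝ) 1)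
    (hnp : Tendsto (fun n : ℕ => (n : ℝ) * p n) atTop atTop)
    (hnpr : Tendsto (fun n : ℕ => (n : ℝ) * p n ^ r) atTop (nhds 0))
    (B W : ∀ n : ℕ, Finset (Fin n))
    (hB : ∀ n, ((B n).card : ℝ) =
      ((n : ℝ) * p n) ^ (-(1 : ℝ) / (4 * ((r : ℝ) - 1))) * (p n)⁻¹ / 4)
    (hW : Tendsto (fun n : ℕ => ((W n).card : ℝ) / n) atTop (nhds 0)) :
    ∃ c : ℕ → ℝ, Tendsto (fun n => c n * p n) atTop atTop ∧
      ∀ᶠ n : ℕ in atTop,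
        ENNReal.ofReal (1 - Real.exp (-(c n))) ≤
          gnp n (p n)
            {ω | ((n : ℝ) * p n) ^ ((1 : ℝ) / (4 * ((r : ℝ) - 1))) * (p n)⁻¹ ≤
              (((Finset.univ \ (B n ∪ W n)).filter
                fun v => r ≤ nbrCount ω (B n) v).card : ℝ)} := by
  classical
  have hrR : (2:ℝ) ≤ (r:ℝ) := by exact_mod_cast hr
  have hr1 : (0:ℝ) < (r:ℝ) - 1 := by linarith
  set ε : ℝ := (1:ℝ)/(4*((r:ℝ)-1)) with hεdef
  have hε : 0 < ε := by rw [hεdef]; positivity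
  have hrε : 0 < 1 - (r:ℝ)*ε := by
    rw [hεdef, mul_one_div, sub_pos, div_lt_one (by linarith)]
    linarith
  have hr1ε : 0 < 1 - ((r:ℝ)+1)*ε := by
    rw [hεdef, mul_one_div, sub_pos, div_lt_one (by linarith)]
    linarith
  set K : ℝ := 16 * 8^r * (r.factorial : ℝ) with hKdef
  have hK0 : 0 < K := by rw [hKdef]; positivity
  set c : ℕ → ℝ := fun n => ((n:ℝ) * p n) ^ (1 - (r:ℝ)*ε) / (K * p n) with hcdef
  have hq0 : Tendsto (fun n => p n) atTop (nhds 0) := by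
    have hcont : Tendsto (fun y : ℝ => y ^ ((1:ℝ)/r)) (nhds 0) (nhds 0) := by
      have h := (Real.continuousAt_rpow_const 0 ((1:ℝ)/r)
        (Or.inr (by positivity))).tendsto
      rwa [Real.zero_rpow (by positivity)] at h
    refine tendsto_of_tendsto_of_tendsto_of_le_of_le' tendsto_const_nhds
      (hcont.comp hnpr) (Eventually.of_forall fun n => (hp n).1.le) ?_
    filter_upwards [eventually_ge_atTop 1] with n hn
    have hq := (hp n).1
    have h1 : p n = (p n ^ r) ^ ((1:ℝ)/r) := by
      rw [← Real.rpow_natCast (p n) r, ← Real.rpow_mul hq.le, mul_one_div,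
        div_self (by positivity), Real.rpow_one]
    rw [h1]
    refine Real.rpow_le_rpow (by positivity) ?_ (by positivity)
    exact le_mul_of_one_le_left (by positivity) (by exact_mod_cast hn)
  have hf0 : Tendsto (fun n => p n * ((n:ℝ) * p n) ^ ε) atTop (nhds 0) := by
    set N : ℕ := 4*(r-1) with hNdef
    have hNr : (N:ℝ) = 4*((r:ℝ)-1) := by
      rw [hNdef]; push_cast [Nat.cast_sub (by omega : 1 ≤ r)]; ring
    have hN0 : (0:ℝ) < N := by rw [hNr]; linarith
    have hNε : ε * N = 1 := by
      rw [hεdef, hNr, one_div, inv_mul_cancel₀ (by linarith)]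
    have hq3 : Tendsto (fun n => p n ^ (3*(r-1))) atTop (nhds 0) := by
      have := hq0.pow (3*(r-1))
      rwa [zero_pow (by omega : 3*(r-1) ≠ 0)] at this
    have hNlim : Tendsto (fun n => (p n * ((n:ℝ) * p n) ^ ε) ^ N) atTop (nhds 0) := by
      have hprod := hnpr.mul hq3
      rw [mul_zero] at hprod
      refine hprod.congr' ?_
      filter_upwards [eventually_ge_atTop 1] with n hn
      have hq := (hp n).1
      have hxnn : (0:ℝ) ≤ (n:ℝ) * p n := by positivity
      rw [mul_pow, ← Real.rpow_natCast (((n:ℝ) * p n) ^ ε) N, ← Real.rpow_mul hxnn,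
        hNε, Real.rpow_one]
      calc (n:ℝ) * p n ^ r * p n ^ (3*(r-1))
          = (n:ℝ) * p n ^ (r + 3*(r-1)) := by rw [pow_add]; ring
        _ = p n ^ N * ((n:ℝ) * p n) := by
            rw [show r + 3*(r-1) = N + 1 by omega, pow_succ]; ring
    have hcont : Tendsto (fun y : ℝ => y ^ ((1:ℝ)/N)) (nhds 0) (nhds 0) := by
      have h := (Real.continuousAt_rpow_const 0 ((1:ℝ)/N)
        (Or.inr (by positivity))).tendsto
      rwa [Real.zero_rpow (by positivity)] at h
    have := hcont.comp hNlim
    refine this.congr fun n => ?_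
    have hfnn : (0:ℝ) ≤ p n * ((n:ℝ) * p n) ^ ε := by
      have := (hp n).1
      positivity
    show ((p n * ((n:ℝ) * p n) ^ ε) ^ N) ^ ((1:ℝ)/N) = _
    rw [← Real.rpow_natCast (p n * ((n:ℝ) * p n) ^ ε) N, ← Real.rpow_mul hfnn,
      mul_one_div, div_self (by positivity), Real.rpow_one]
  have hexp : (-(1:ℝ))/(4*((r:ℝ)-1)) = -ε := by rw [hεdef]; ring
  have hbcard : ∀ᶠ n in atTop, ((B n).card : ℝ) = (p n * ((n:ℝ) * p n) ^ ε)⁻¹ / 4 := by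
    filter_upwards [eventually_ge_atTop 1] with n hn
    have hq := (hp n).1
    have hxnn : (0:ℝ) ≤ (n:ℝ) * p n := by positivity
    rw [hB n, hexp, Real.rpow_neg hxnn, mul_inv]
    ring
  have hbinf : Tendsto (fun n => ((B n).card : ℝ)) atTop atTop := by
    have hpos : ∀ᶠ n in atTop, p n * ((n:ℝ) * p n) ^ ε ∈ Set.Ioi (0:ℝ) := by
      filter_upwards [eventually_ge_atTop 1] with n hn
      have hq := (hp n).1
      have : (0:ℝ) < (n:ℝ) * p n := by
        have : (0:ℝ) < (n:ℝ) := by exact_mod_cast hn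
        positivity
      have := Real.rpow_pos_of_pos this ε
      simp only [Set.mem_Ioi]
      positivity
    have h1 : Tendsto (fun n => (p n * ((n:ℝ) * p n) ^ ε)⁻¹) atTop atTop :=
      (tendsto_nhdsWithin_of_tendsto_nhds_of_eventually_within _ hf0 hpos).inv_tendsto_nhdsGT_zero
    refine (Tendsto.atTop_div_const (by norm_num : (0:ℝ) < 4) h1).congr' ?_
    filter_upwards [hbcard] with n hn
    exact hn.symm
  refine ⟨c, ?_, ?_⟩
  · refine (Tendsto.atTop_div_const hK0 ((tendsto_rpow_atTop hrε).comp hnp)).congr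
      fun n => ?_
    have hq := (hp n).1
    rw [hcdef]
    show ((n:ℝ) * p n) ^ (1 - (r:ℝ)*ε) / K
      = ((n:ℝ) * p n) ^ (1 - (r:ℝ)*ε) / (K * p n) * p n
    field_simp
  · filter_upwards [eventually_ge_atTop 1, hnp.eventually_ge_atTop 1,
      (hf0.eventually_lt_const (show (0:ℝ) < 1/(8*r) by positivity)),
      hbinf.eventually_ge_atTop (2*(r:ℝ)),
      hW.eventually_lt_const (show (0:ℝ) < 1/4 by norm_num),
      ((tendsto_rpow_atTop hr1ε).comp hnp).eventually_ge_atTop (2*K*Real.log 2),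
      hbcard] with n hn1 hx1 hf18 hb2r hw4 hxK hbval'
    -- per-n setup
    set q : ℝ := p n with hqdef
    have hq0n : 0 < q := (hp n).1
    have hq1n : q < 1 := (hp n).2
    have hn0 : (0:ℝ) < n := by exact_mod_cast hn1
    set xn : ℝ := (n:ℝ) * q with hxdef
    have hxpos : 0 < xn := by rw [hxdef]; positivity
    have hxnn : (0:ℝ) ≤ xn := hxpos.le
    have hchern := chernoff_fixed hq0n hq1n r (B n) (W n) (xn ^ ε * q⁻¹)
    set β : ℝ := xn ^ (-ε) with hβdef
    have hβpos : 0 < β := Real.rpow_pos_of_pos hxpos _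
    have hβ1 : β ≤ 1 := Real.rpow_le_one_of_one_le_of_nonpos hx1 (by linarith)
    set b : ℕ := (B n).card with hbdef
    set π₀ : ℝ := (b.choose r : ℝ) * q ^ r * (1 - q) ^ (b - r) with hπdef
    set m : ℕ := (Finset.univ \ (B n ∪ W n)).card with hmdef
    -- card identities
    have hbval : (b:ℝ) = β * q⁻¹ / 4 := by
      rw [hbval', hβdef, Real.rpow_neg hxnn, mul_inv]
      ring
    have hbq : (b:ℝ) * q = β / 4 := by
      rw [hbval]
      field_simp
    have hqinv : q⁻¹ = (n:ℝ) / xn := by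
      rw [hxdef, eq_div_iff (by positivity)]
      field_simp
    have hrb : r ≤ b := by
      have : (r:ℝ) ≤ (b:ℝ) := by linarith
      exact_mod_cast this
    -- choose lower bound
    have hchoose : ((b:ℝ)/2)^r / (r.factorial:ℝ) ≤ (b.choose r : ℝ) := by
      refine le_trans ?_ (Nat.pow_le_choose r b)
      have hcast : ((b + 1 - r : ℕ) : ℝ) = (b:ℝ) + 1 - (r:ℝ) := by
        rw [Nat.cast_sub (by omega : r ≤ b + 1)]
        push_cast
        ring
      rw [hcast]
      have hb0 : (0:ℝ) ≤ (b:ℝ) := Nat.cast_nonneg b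
      gcongr <;> linarith
    -- Bernoulli bound
    have hpow1q : (1:ℝ)/2 ≤ (1 - q)^(b - r) := by
      have hber := one_add_mul_le_pow (show (-2:ℝ) ≤ -q by linarith) (b - r)
      rw [← sub_eq_add_neg] at hber
      have hcast : ((b - r:ℕ):ℝ) ≤ (b:ℝ) := by exact_mod_cast Nat.sub_le b r
      have h2 : ((b - r:ℕ):ℝ) * q ≤ (b:ℝ) * q := mul_le_mul_of_nonneg_right hcast hq0n.le
      have h4 : ((b - r:ℕ):ℝ) * -q = -(((b - r:ℕ):ℝ) * q) := by ring
      rw [h4] at hber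
      linarith [hber, h2, hbq, hβ1]
    -- pi lower bound
    have hπ₀ge : (β/8)^r / (2*(r.factorial:ℝ)) ≤ π₀ := by
      have h1 : ((b:ℝ)/2)^r/(r.factorial:ℝ) * q^r * (1/2) ≤ π₀ := by
        rw [hπdef]
        refine mul_le_mul (mul_le_mul hchoose le_rfl (by positivity) (by positivity))
          hpow1q (by norm_num) (by positivity)
      refine le_trans (le_of_eq ?_) h1
      have hb2 : (b:ℝ)/2 * q = β/8 := by
        have h3 : (b:ℝ)/2 * q = (b:ℝ)*q/2 := by ring
        rw [h3, hbq]
        ring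
      calc (β/8)^r/(2*(r.factorial:ℝ)) = ((b:ℝ)/2*q)^r/(2*(r.factorial:ℝ)) := by rw [hb2]
        _ = ((b:ℝ)/2)^r/(r.factorial:ℝ) * q^r * (1/2) := by
            rw [mul_pow]
            ring
    -- m lower bound
    have hUle : (B n ∪ W n).card ≤ n := by
      refine le_trans (Finset.card_le_univ _) ?_
      simp
    have hmval : (m:ℝ) = (n:ℝ) - ((B n ∪ W n).card:ℝ) := by
      rw [hmdef, Finset.card_sdiff_of_subset (Finset.subset_univ _), Finset.card_univ, Fintype.card_fin,
        Nat.cast_sub hUle]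
    have hble : (b:ℝ) ≤ (n:ℝ)/4 := by
      rw [hbval, hqinv]
      have hd : (n:ℝ)/xn ≤ (n:ℝ) := div_le_self hn0.le hx1
      have h1 : β * ((n:ℝ)/xn) ≤ 1 * (n:ℝ) := by
        refine mul_le_mul hβ1 hd (by positivity) zero_le_one
      linarith
    have hwle : ((W n).card:ℝ) ≤ (n:ℝ)/4 := by
      rw [div_lt_iff₀ hn0] at hw4
      linarith
    have hunion : ((B n ∪ W n).card : ℝ) ≤ (b:ℝ) + ((W n).card:ℝ) := by
      rw [hbdef]
      exact_mod_cast Finset.card_union_le _ _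
    have hm : (n:ℝ)/2 ≤ (m:ℝ) := by
      rw [hmval]
      linarith
    -- rpow identities
    have hβr : β^r = xn ^ (-ε*(r:ℝ)) := by
      rw [hβdef, ← Real.rpow_natCast (xn ^ (-ε)) r, ← Real.rpow_mul hxnn]
    have hxsplit1 : xn ^ (1-(r:ℝ)*ε) = xn * xn ^ (-ε*(r:ℝ)) := by
      rw [show (1:ℝ)-(r:ℝ)*ε = 1 + (-ε*(r:ℝ)) by ring, Real.rpow_add hxpos, Real.rpow_one]
    have hnb : (n:ℝ) * β^r * q = xn ^ (1-(r:ℝ)*ε) := by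
      rw [hβr, hxsplit1, hxdef]
      ring
    have hcval2 : c n = xn ^ (1-(r:ℝ)*ε)/(K*q) := by
      simp only [hcdef]
      rfl
    have hcval : c n = (n:ℝ) * β^r / K := by
      rw [hcval2, ← hnb]
      field_simp
    -- C1
    have hC1 : 2 * c n ≤ (m:ℝ) * π₀ / 2 := by
      have hfac0 : (0:ℝ) < (r.factorial:ℝ) := by exact_mod_cast r.factorial_pos
      have hβ8 : (0:ℝ) ≤ β/8 := by linarith
      have h0a : (0:ℝ) ≤ (β/8)^r/(2*(r.factorial:ℝ)) :=
        div_nonneg (pow_nonneg hβ8 r) (by linarith)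
      have h1 : (n:ℝ)/2 * ((β/8)^r/(2*(r.factorial:ℝ))) ≤ (m:ℝ) * π₀ :=
        mul_le_mul hm hπ₀ge h0a (Nat.cast_nonneg m)
      have h2 : 2 * c n = ((n:ℝ)/2 * ((β/8)^r/(2*(r.factorial:ℝ))))/2 := by
        rw [hcval, hKdef, div_pow]
        have h8 : ((8:ℝ))^r ≠ 0 := by positivity
        have hfac : ((r.factorial:ℕ):ℝ) ≠ 0 := by positivity
        field_simp
        ring
      linarith
    -- C2
    have hkk1 : 1 ≤ xn^ε * q⁻¹ := by
      have h1 : 1 ≤ xn^ε := Real.one_le_rpow hx1 hε.le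
      have h2 : 1 ≤ q⁻¹ := (one_le_inv₀ hq0n).mpr hq1n.le
      calc (1:ℝ) = 1 * 1 := by norm_num
        _ ≤ xn^ε * q⁻¹ := mul_le_mul h1 h2 zero_le_one (le_trans zero_le_one h1)
    have hkk0 : (0:ℝ) ≤ xn^ε * q⁻¹ := by linarith
    have hk'le : ((⌈xn^ε * q⁻¹⌉₊:ℕ):ℝ) ≤ 2*(xn^ε * q⁻¹) := by
      have := Nat.ceil_lt_add_one hkk0
      linarith
    have hlog2 : 0 < Real.log 2 := Real.log_pos one_lt_two
    have hxsplit2 : xn ^ (1-(r:ℝ)*ε) = xn^(1-((r:ℝ)+1)*ε) * xn^ε := by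
      rw [← Real.rpow_add hxpos]
      congr 1
      ring
    have hC2 : ((⌈xn^ε * q⁻¹⌉₊:ℕ):ℝ) * Real.log 2 ≤ c n := by
      have h1 : 2*K*Real.log 2 * (xn^ε * q⁻¹ / K) ≤
          xn^(1-((r:ℝ)+1)*ε) * (xn^ε * q⁻¹ / K) :=
        mul_le_mul_of_nonneg_right hxK (by positivity)
      have h2 : xn^(1-((r:ℝ)+1)*ε) * (xn^ε * q⁻¹/K) = c n := by
        rw [hcval2, hxsplit2]
        field_simp
      have h3 : 2*K*Real.log 2 * (xn^ε*q⁻¹/K) = 2*Real.log 2*(xn^ε*q⁻¹) := by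
        field_simp
      calc ((⌈xn^ε * q⁻¹⌉₊:ℕ):ℝ) * Real.log 2 ≤ 2*(xn^ε*q⁻¹) * Real.log 2 :=
            mul_le_mul_of_nonneg_right hk'le hlog2.le
        _ = 2*Real.log 2*(xn^ε*q⁻¹) := by ring
        _ ≤ c n := le_of_eq_of_le h3.symm (h1.trans_eq h2)
    -- conclude
    have hFail : gnp n q {ω | ¬ (xn^ε * q⁻¹ ≤
        ((((Finset.univ \ (B n ∪ W n)).filter
          fun v => r ≤ nbrCount ω (B n) v).card : ℝ)))} ≤
        ENNReal.ofReal (Real.exp (-(c n))) := by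
      refine hchern.trans (ENNReal.ofReal_le_ofReal (Real.exp_le_exp.mpr ?_))
      linarith
    have hset : {ω : Sym2 (Fin n) → Bool | xn^ε * q⁻¹ ≤
        ((((Finset.univ \ (B n ∪ W n)).filter
          fun v => r ≤ nbrCount ω (B n) v).card : ℝ))} =
        {ω | ¬ (xn^ε * q⁻¹ ≤
        ((((Finset.univ \ (B n ∪ W n)).filter
          fun v => r ≤ nbrCount ω (B n) v).card : ℝ)))}ᶜ := by
      ext ω
      simp
    haveI := gnp_prob n q
    rw [hset, measure_compl (measAll _) (measure_ne_top _ _), measure_univ,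
      ENNReal.ofReal_sub 1 (Real.exp_nonneg _), ENNReal.ofReal_one]
    exact tsub_le_tsub_left hFail 1



end
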